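/- Let {a_ν} be a non-negative decreasing sequence, α > 0, λ ∈ ℝ, and 0 < p ≤ 1. Then there exists C > 0 depending only on α, λ, p such that for all positive integers n, m with m ≥ 4n, ∑_{μ=4n}^{m} μ^{α-1} (∑_{ν=μ}^{m} a_ν ν^λ)^p ≤ C ∑_{μ=n}^{m} μ^{α-1} (a_μ μ^{λ+1})^p. -/

import Mathlib

open Finset
open scoped NNReal


/-- If `x ≤ y ≤ 2x` with `x > 0`, then `y ^ t ≤ 2 ^ |t| * x ^ t`. -/
lemma aux_between (t : ℝ) {x y : ℝ} (hx : 0 < x) (h1 : x ≤ y) (h2 : y ≤ 2 * x) :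
    y ^ t ≤ (2:ℝ) ^ |t| * x ^ t := by
  rcases le_or_gt 0 t with ht | ht
  · rw [abs_of_nonneg ht]
    calc y ^ t ≤ (2 * x) ^ t := Real.rpow_le_rpow (hx.le.trans h1) h2 ht
      _ = (2:ℝ) ^ t * x ^ t := Real.mul_rpow (by norm_num) hx.le
  · rw [abs_of_neg ht]
    have h3 : y ^ t ≤ x ^ t := Real.rpow_le_rpow_of_nonpos hx h1 ht.le
    have h4 : (1:ℝ) ≤ (2:ℝ) ^ (-t) := Real.one_le_rpow (by norm_num) (by linarith)
    calc y ^ t ≤ x ^ t := h3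
      _ ≤ (2:ℝ) ^ (-t) * x ^ t := le_mul_of_one_le_left (Real.rpow_nonneg hx.le t) h4

lemma aux_add_rpow {p : ℝ} (hp : 0 ≤ p) (hp1 : p ≤ 1) {x y : ℝ} (hx : 0 ≤ x) (hy : 0 ≤ y) :
    (x + y) ^ p ≤ x ^ p + y ^ p := by
  have := NNReal.rpow_add_le_add_rpow (x.toNNReal) (y.toNNReal) hp hp1
  have h2 : ((x.toNNReal + y.toNNReal : ℝ≥0) : ℝ) = x + y := by
    simp [Real.coe_toNNReal _ hx, Real.coe_toNNReal _ hy]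
  calc (x + y) ^ p = ((x.toNNReal + y.toNNReal : ℝ≥0) : ℝ) ^ p := by rw [h2]
    _ = (((x.toNNReal + y.toNNReal) ^ p : ℝ≥0) : ℝ) := by rw [NNReal.coe_rpow]
    _ ≤ ((x.toNNReal ^ p + y.toNNReal ^ p : ℝ≥0) : ℝ) := by exact_mod_cast this
    _ = x ^ p + y ^ p := by
        push_cast [NNReal.coe_rpow, Real.coe_toNNReal _ hx, Real.coe_toNNReal _ hy]; ring

lemma aux_sum_rpow {p : ℝ} (hp : 0 < p) (hp1 : p ≤ 1) {ι : Type*} (s : Finset ι) (f : ι → ℝ)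
    (hf : ∀ i ∈ s, 0 ≤ f i) : (∑ i ∈ s, f i) ^ p ≤ ∑ i ∈ s, f i ^ p := by
  induction s using Finset.cons_induction with
  | empty => simp [Real.zero_rpow hp.ne']
  | cons a s ha ih =>
      rw [Finset.sum_cons, Finset.sum_cons]
      have h1 : 0 ≤ f a := hf a (Finset.mem_cons_self a s)
      have h2 : ∀ i ∈ s, 0 ≤ f i := fun i hi => hf i (Finset.mem_cons_of_mem hi)
      calc (f a + ∑ i ∈ s, f i) ^ p ≤ f a ^ p + (∑ i ∈ s, f i) ^ p :=
            aux_add_rpow hp.le hp1 h1 (Finset.sum_nonneg h2)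
        _ ≤ f a ^ p + ∑ i ∈ s, f i ^ p := by linarith [ih h2]

lemma aux_geom (α : ℝ) (hα : 0 < α) (K : ℕ) :
    ∑ k ∈ range K, ((2:ℝ) ^ (-α)) ^ k ≤ (1 - (2:ℝ) ^ (-α))⁻¹ := by
  set r : ℝ := (2:ℝ) ^ (-α) with hr
  have hr0 : 0 < r := Real.rpow_pos_of_pos (by norm_num) _
  have hr1 : r < 1 := Real.rpow_lt_one_of_one_lt_of_neg (by norm_num) (by linarith)
  have h1 : (0:ℝ) < 1 - r := by linarith
  rw [geom_sum_eq (by intro h; rw [h] at hr1; linarith : r ≠ 1)]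
  have h2 : (r ^ K - 1) / (r - 1) = (1 - r ^ K) / (1 - r) := by
    rw [← neg_div_neg_eq]; ring_nf
  rw [h2, div_le_iff₀ h1, inv_mul_cancel₀ h1.ne']
  have : 0 ≤ r ^ K := pow_nonneg hr0.le K
  linarith

lemma lemAB (lam p : ℝ) (hp0 : 0 < p) (hp1 : p ≤ 1) (a : ℕ → ℝ) (ha0 : ∀ ν, 0 ≤ a ν)
    (hmono : ∀ i j : ℕ, i ≤ j → a j ≤ a i) (m N : ℕ) (hN : 1 ≤ N) :
    (∑ ν ∈ Icc N (min (2 * N - 1) m), a ν * (ν:ℝ) ^ lam) ^ p ≤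
      (2:ℝ) ^ (|lam| * p) * (2:ℝ) ^ (1 + |(lam + 1) * p|) * ((N:ℝ))⁻¹ *
        ∑ j ∈ Ioc (N / 2) (min N m), a j ^ p * (j:ℝ) ^ ((lam + 1) * p) := by
  set β : ℝ := (lam + 1) * p with hβ
  have hRHSnn : 0 ≤ (2:ℝ) ^ (|lam| * p) * (2:ℝ) ^ (1 + |β|) * ((N:ℝ))⁻¹ *
      ∑ j ∈ Ioc (N / 2) (min N m), a j ^ p * (j:ℝ) ^ β := by
    apply mul_nonneg
    · positivity
    · exact Finset.sum_nonneg fun j _ => mul_nonneg (Real.rpow_nonneg (ha0 j) p)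
        (Real.rpow_nonneg (Nat.cast_nonneg j) β)
  rcases lt_or_ge m N with hmN | hNm
  · have he : Icc N (min (2 * N - 1) m) = ∅ := Finset.Icc_eq_empty (by omega)
    rw [he, Finset.sum_empty, Real.zero_rpow hp0.ne']
    exact hRHSnn
  · have hmin : min N m = N := min_eq_left hNm
    have hN0 : (0:ℝ) < (N:ℝ) := by exact_mod_cast hN
    set c : ℝ := (2:ℝ) ^ |β| with hc
    have hc0 : (0:ℝ) < c := Real.rpow_pos_of_pos (by norm_num) _
    set E : ℝ := a N ^ p * (N:ℝ) ^ β with hE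
    have hE0 : 0 ≤ E := mul_nonneg (Real.rpow_nonneg (ha0 N) p) (Real.rpow_nonneg hN0.le β)
    set Ssum : ℝ := ∑ j ∈ Ioc (N / 2) (min N m), a j ^ p * (j:ℝ) ^ β with hSs
    -- Step A
    have hA : ∑ ν ∈ Icc N (min (2 * N - 1) m), a ν * (ν:ℝ) ^ lam ≤
        (N:ℝ) * (a N * ((2:ℝ) ^ |lam| * (N:ℝ) ^ lam)) := by
      have hcard : ((Icc N (min (2 * N - 1) m)).card : ℝ) ≤ (N:ℝ) := by
        have : (Icc N (min (2 * N - 1) m)).card ≤ N := by rw [Nat.card_Icc]; omega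
        exact_mod_cast this
      have hterm : ∀ ν ∈ Icc N (min (2 * N - 1) m),
          a ν * (ν:ℝ) ^ lam ≤ a N * ((2:ℝ) ^ |lam| * (N:ℝ) ^ lam) := by
        intro ν hν
        rw [Finset.mem_Icc] at hν
        have h1 : (N:ℝ) ≤ (ν:ℝ) := by exact_mod_cast hν.1
        have h2 : (ν:ℝ) ≤ 2 * (N:ℝ) := by
          have : ν ≤ 2 * N := by omega
          exact_mod_cast this
        exact mul_le_mul (hmono N ν hν.1) (aux_between lam hN0 h1 h2)
          (Real.rpow_nonneg (Nat.cast_nonneg ν) lam) (ha0 N)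
      calc ∑ ν ∈ Icc N (min (2 * N - 1) m), a ν * (ν:ℝ) ^ lam
          ≤ (Icc N (min (2 * N - 1) m)).card • (a N * ((2:ℝ) ^ |lam| * (N:ℝ) ^ lam)) :=
            Finset.sum_le_card_nsmul _ _ _ hterm
        _ = ((Icc N (min (2 * N - 1) m)).card : ℝ) * (a N * ((2:ℝ) ^ |lam| * (N:ℝ) ^ lam)) := by
            rw [nsmul_eq_mul]
        _ ≤ (N:ℝ) * (a N * ((2:ℝ) ^ |lam| * (N:ℝ) ^ lam)) := by
            apply mul_le_mul_of_nonneg_right hcard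
            exact mul_nonneg (ha0 N) (by positivity)
    have hTnn : 0 ≤ ∑ ν ∈ Icc N (min (2 * N - 1) m), a ν * (ν:ℝ) ^ lam :=
      Finset.sum_nonneg fun ν _ => mul_nonneg (ha0 ν) (Real.rpow_nonneg (Nat.cast_nonneg ν) lam)
    have hXeq : (N:ℝ) * (a N * ((2:ℝ) ^ |lam| * (N:ℝ) ^ lam)) =
        (2:ℝ) ^ |lam| * (a N * (N:ℝ) ^ (lam + 1)) := by
      rw [Real.rpow_add hN0 lam 1, Real.rpow_one]; ring
    have hAp : (∑ ν ∈ Icc N (min (2 * N - 1) m), a ν * (ν:ℝ) ^ lam) ^ p ≤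
        (2:ℝ) ^ (|lam| * p) * E := by
      have h1 := Real.rpow_le_rpow hTnn hA hp0.le
      rw [hXeq] at h1
      have h2 : ((2:ℝ) ^ |lam| * (a N * (N:ℝ) ^ (lam + 1))) ^ p = (2:ℝ) ^ (|lam| * p) * E := by
        rw [Real.mul_rpow (by positivity) (mul_nonneg (ha0 N) (by positivity)),
          Real.mul_rpow (ha0 N) (by positivity),
          ← Real.rpow_mul (by norm_num : (0:ℝ) ≤ 2),
          ← Real.rpow_mul hN0.le, hE, hβ]
      rw [h2] at h1; exact h1
    -- Step B
    have hcard2 : (N:ℝ) / 2 ≤ ((Ioc (N / 2) (min N m)).card : ℝ) := by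
      rw [hmin, Nat.card_Ioc]
      have h1 : ((N / 2 : ℕ) : ℝ) ≤ (N:ℝ) / 2 := by
        have := Nat.cast_div_le (α := ℝ) (m := N) (n := 2)
        simpa using this
      have h2 : ((N - N / 2 : ℕ) : ℝ) = (N:ℝ) - ((N / 2 : ℕ) : ℝ) := by
        have : N / 2 ≤ N := Nat.div_le_self N 2
        push_cast [this]; ring
      rw [h2]; linarith
    have hterm2 : ∀ j ∈ Ioc (N / 2) (min N m), E / c ≤ a j ^ p * (j:ℝ) ^ β := by
      intro j hj
      rw [hmin, Finset.mem_Ioc] at hj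
      have hj1 : 1 ≤ j := by omega
      have hj0 : (0:ℝ) < (j:ℝ) := by exact_mod_cast hj1
      have hjN : (j:ℝ) ≤ (N:ℝ) := by exact_mod_cast hj.2
      have hN2j : (N:ℝ) ≤ 2 * (j:ℝ) := by
        have : N ≤ 2 * j := by omega
        exact_mod_cast this
      have hap : a N ^ p ≤ a j ^ p :=
        Real.rpow_le_rpow (ha0 N) (hmono j N hj.2) hp0.le
      have hNβ : (N:ℝ) ^ β ≤ c * (j:ℝ) ^ β := aux_between β hj0 hjN hN2j
      have : E ≤ a j ^ p * (c * (j:ℝ) ^ β) := by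
        apply mul_le_mul hap hNβ (Real.rpow_nonneg hN0.le β) (Real.rpow_nonneg (ha0 j) p)
      rw [div_le_iff₀ hc0]
      calc E ≤ a j ^ p * (c * (j:ℝ) ^ β) := this
        _ = a j ^ p * (j:ℝ) ^ β * c := by ring
    have hB : E ≤ (2:ℝ) ^ (1 + |β|) * ((N:ℝ))⁻¹ * Ssum := by
      have hsum : ((Ioc (N / 2) (min N m)).card : ℝ) * (E / c) ≤ Ssum := by
        have := Finset.card_nsmul_le_sum (Ioc (N / 2) (min N m)) _ (E / c) hterm2
        rwa [nsmul_eq_mul] at this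
      have hge : (N:ℝ) / 2 * (E / c) ≤ Ssum :=
        le_trans (mul_le_mul_of_nonneg_right hcard2 (by positivity)) hsum
      have h2c : (2:ℝ) ^ (1 + |β|) = 2 * c := by
        rw [Real.rpow_add (by norm_num : (0:ℝ) < 2), Real.rpow_one]
      rw [h2c]
      have key : E = 2 * c * ((N:ℝ))⁻¹ * ((N:ℝ) / 2 * (E / c)) := by
        field_simp
      rw [key]
      gcongr
    calc (∑ ν ∈ Icc N (min (2 * N - 1) m), a ν * (ν:ℝ) ^ lam) ^ p
        ≤ (2:ℝ) ^ (|lam| * p) * E := hAp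
      _ ≤ (2:ℝ) ^ (|lam| * p) * ((2:ℝ) ^ (1 + |β|) * ((N:ℝ))⁻¹ * Ssum) := by
          apply mul_le_mul_of_nonneg_left hB (by positivity)
      _ = (2:ℝ) ^ (|lam| * p) * (2:ℝ) ^ (1 + |β|) * ((N:ℝ))⁻¹ * Ssum := by ring

lemma lemCount (α : ℝ) (hα : 0 < α) (n m q j : ℕ) (hq : 1 ≤ q) (hj : 1 ≤ j) (hn : 1 ≤ n) :
    ∑ μ ∈ Icc (4 * n) m, (if j ∈ Ioc (q * μ / 2) (min (q * μ) m) then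
        (μ:ℝ) ^ (α - 1) * ((q * μ : ℕ):ℝ)⁻¹ else 0) ≤
      4 * (2:ℝ) ^ |α - 1| * (q:ℝ) ^ (-α) * (j:ℝ) ^ (α - 1) := by
  have hq0 : (0:ℝ) < (q:ℝ) := by exact_mod_cast hq
  have hj0 : (0:ℝ) < (j:ℝ) := by exact_mod_cast hj
  have hRnn : 0 ≤ 4 * (2:ℝ) ^ |α - 1| * (q:ℝ) ^ (-α) * (j:ℝ) ^ (α - 1) := by positivity
  rw [← Finset.sum_filter]
  set t := (Icc (4 * n) m).filter (fun μ => j ∈ Ioc (q * μ / 2) (min (q * μ) m)) with ht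
  have hmem : ∀ μ ∈ t, j ≤ q * μ ∧ q * μ < 2 * j ∧ 1 ≤ μ := by
    intro μ hμ
    rw [ht, Finset.mem_filter, Finset.mem_Icc, Finset.mem_Ioc] at hμ
    obtain ⟨⟨h1, h2⟩, h3, h4⟩ := hμ
    have h5 : q * μ < j * 2 := (Nat.div_lt_iff_lt_mul (by norm_num)).mp h3
    have h6 : j ≤ q * μ := (le_min_iff.mp h4).1
    omega
  set B0 : ℝ := (2:ℝ) ^ |α - 1| * ((j:ℝ) / (q:ℝ)) ^ (α - 1) * (j:ℝ)⁻¹ with hB0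
  have hB0nn : 0 ≤ B0 := by positivity
  have hterm : ∀ μ ∈ t, (μ:ℝ) ^ (α - 1) * ((q * μ : ℕ):ℝ)⁻¹ ≤ B0 := by
    intro μ hμ
    obtain ⟨h1, h2, h3⟩ := hmem μ hμ
    have hx : (0:ℝ) < (j:ℝ) / (q:ℝ) := by positivity
    have hr1 : (j:ℝ) ≤ (q:ℝ) * (μ:ℝ) := by exact_mod_cast h1
    have hr2 : (q:ℝ) * (μ:ℝ) ≤ 2 * (j:ℝ) := by
      have h7 : q * μ ≤ 2 * j := h2.le
      exact_mod_cast h7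
    have hd1 : (j:ℝ) / (q:ℝ) ≤ (μ:ℝ) := by
      rw [div_le_iff₀ hq0]; linarith
    have hd2 : (μ:ℝ) ≤ 2 * ((j:ℝ) / (q:ℝ)) := by
      rw [mul_div_assoc', le_div_iff₀ hq0]; linarith
    have hpow : (μ:ℝ) ^ (α - 1) ≤ (2:ℝ) ^ |α - 1| * ((j:ℝ) / (q:ℝ)) ^ (α - 1) :=
      aux_between (α - 1) hx hd1 hd2
    have hinv : ((q * μ : ℕ):ℝ)⁻¹ ≤ (j:ℝ)⁻¹ := by
      have hcast : (j:ℝ) ≤ ((q * μ : ℕ):ℝ) := by exact_mod_cast h1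
      exact inv_anti₀ hj0 hcast
    rw [hB0]
    exact mul_le_mul hpow hinv (by positivity) (by positivity)
  rcases t.eq_empty_or_nonempty with hte | ⟨μ0, hμ0⟩
  · rw [hte, Finset.sum_empty]; exact hRnn
  · have hcardle : (t.card : ℝ) ≤ 4 * (j:ℝ) / (q:ℝ) := by
      have hsub : t ⊆ Icc (j / q) (2 * j / q) := by
        intro μ hμ
        obtain ⟨h1, h2, h3⟩ := hmem μ hμ
        rw [Finset.mem_Icc]
        constructor
        · calc j / q ≤ q * μ / q := Nat.div_le_div_right h1
            _ = μ := by rw [Nat.mul_div_cancel_left μ (by omega)]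
        · calc μ = q * μ / q := by rw [Nat.mul_div_cancel_left μ (by omega)]
            _ ≤ 2 * j / q := Nat.div_le_div_right h2.le
      have hc1 : t.card ≤ 2 * j / q + 1 := by
        calc t.card ≤ (Icc (j / q) (2 * j / q)).card := Finset.card_le_card hsub
          _ = 2 * j / q + 1 - j / q := Nat.card_Icc _ _
          _ ≤ 2 * j / q + 1 := Nat.sub_le _ _
      have hc2 : ((2 * j / q : ℕ) : ℝ) ≤ 2 * (j:ℝ) / (q:ℝ) := by
        have h8 := Nat.cast_div_le (α := ℝ) (m := 2 * j) (n := q)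
        push_cast at h8 ⊢
        exact h8
      have hone : (1:ℝ) ≤ 2 * (j:ℝ) / (q:ℝ) := by
        obtain ⟨h1, h2, h3⟩ := hmem μ0 hμ0
        have h9 : q ≤ 2 * j := by
          calc q = q * 1 := (mul_one q).symm
            _ ≤ q * μ0 := Nat.mul_le_mul_left q h3
            _ ≤ 2 * j := h2.le
        rw [le_div_iff₀ hq0]
        have h10 : (q:ℝ) ≤ 2 * (j:ℝ) := by exact_mod_cast h9
        linarith
      calc (t.card : ℝ) ≤ ((2 * j / q + 1 : ℕ) : ℝ) := by exact_mod_cast hc1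
        _ = ((2 * j / q : ℕ) : ℝ) + 1 := by push_cast; ring
        _ ≤ 2 * (j:ℝ) / (q:ℝ) + 2 * (j:ℝ) / (q:ℝ) := by linarith
        _ = 4 * (j:ℝ) / (q:ℝ) := by ring
    have hsum : ∑ μ ∈ t, (μ:ℝ) ^ (α - 1) * ((q * μ : ℕ):ℝ)⁻¹ ≤ (t.card : ℝ) * B0 := by
      have h11 := Finset.sum_le_card_nsmul t _ B0 hterm
      rwa [nsmul_eq_mul] at h11
    have halg : 4 * (j:ℝ) / (q:ℝ) * B0 = 4 * (2:ℝ) ^ |α - 1| * (q:ℝ) ^ (-α) * (j:ℝ) ^ (α - 1) := by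
      rw [hB0, Real.div_rpow hj0.le hq0.le, Real.rpow_sub hj0, Real.rpow_sub hq0,
        Real.rpow_one, Real.rpow_one, Real.rpow_neg hq0.le]
      have hja : (0:ℝ) < (j:ℝ) ^ α := Real.rpow_pos_of_pos hj0 α
      have hqa : (0:ℝ) < (q:ℝ) ^ α := Real.rpow_pos_of_pos hq0 α
      field_simp
    calc ∑ μ ∈ t, (μ:ℝ) ^ (α - 1) * ((q * μ : ℕ):ℝ)⁻¹ ≤ (t.card : ℝ) * B0 := hsum
      _ ≤ 4 * (j:ℝ) / (q:ℝ) * B0 := mul_le_mul_of_nonneg_right hcardle hB0nn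
      _ = _ := halg


theorem stmt_10 (α lam p : ℝ) (hα : 0 < α) (hp0 : 0 < p) (hp1 : p ≤ 1) :
    ∃ C : ℝ, 0 < C ∧ ∀ a : ℕ → ℝ, (∀ ν, 0 ≤ a ν) → (∀ ν, a (ν + 1) ≤ a ν) →
      ∀ n m : ℕ, 1 ≤ n → 4 * n ≤ m →
        ∑ μ ∈ Icc (4 * n) m, (μ : ℝ) ^ (α - 1) * (∑ ν ∈ Icc μ m, a ν * (ν : ℝ) ^ lam) ^ p ≤
          C * ∑ μ ∈ Icc n m, (μ : ℝ) ^ (α - 1) * (a μ * (μ : ℝ) ^ (lam + 1)) ^ p := by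
  set β : ℝ := (lam + 1) * p with hβ
  set c5 : ℝ := (2:ℝ) ^ (|lam| * p) * (2:ℝ) ^ (1 + |β|) with hc5
  set c6 : ℝ := 4 * (2:ℝ) ^ |α - 1| with hc6
  have hr1 : (2:ℝ) ^ (-α) < 1 := Real.rpow_lt_one_of_one_lt_of_neg (by norm_num) (by linarith)
  have hr0 : (0:ℝ) < (2:ℝ) ^ (-α) := Real.rpow_pos_of_pos (by norm_num) _
  have hgeomc : (0:ℝ) < (1 - (2:ℝ) ^ (-α))⁻¹ := inv_pos.mpr (by linarith)
  refine ⟨c5 * c6 * (1 - (2:ℝ) ^ (-α))⁻¹, by positivity, ?_⟩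
  intro a ha0 hdec n m hn hm
  have hmono : ∀ i j : ℕ, i ≤ j → a j ≤ a i := fun i j h =>
    antitone_nat_of_succ_le hdec h
  -- notation
  set w : ℕ → ℝ := fun j => a j ^ p * (j:ℝ) ^ β with hw
  have hwnn : ∀ j, 0 ≤ w j := fun j =>
    mul_nonneg (Real.rpow_nonneg (ha0 j) p) (Real.rpow_nonneg (Nat.cast_nonneg j) β)
  set S : ℝ := ∑ j ∈ Icc n m, (j:ℝ) ^ (α - 1) * w j with hS
  have hSnn : 0 ≤ S :=
    Finset.sum_nonneg fun j _ => mul_nonneg (Real.rpow_nonneg (Nat.cast_nonneg j) _) (hwnn j)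
  have hRHSeq : ∑ μ ∈ Icc n m, (μ:ℝ) ^ (α - 1) * (a μ * (μ:ℝ) ^ (lam + 1)) ^ p = S := by
    apply Finset.sum_congr rfl
    intro μ _
    rw [Real.mul_rpow (ha0 μ) (Real.rpow_nonneg (Nat.cast_nonneg μ) _),
      ← Real.rpow_mul (Nat.cast_nonneg μ)]
  set K : ℕ := m + 1 with hK
  set Tset : ℕ → ℕ → Finset ℕ := fun μ k => Ioc (2 ^ k * μ / 2) (min (2 ^ k * μ) m) with hTset
  -- Step 1 + 2 per μ
  have step12 : ∀ μ ∈ Icc (4 * n) m,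
      (∑ ν ∈ Icc μ m, a ν * (ν:ℝ) ^ lam) ^ p ≤
        ∑ k ∈ range K, c5 * ((2 ^ k * μ : ℕ):ℝ)⁻¹ * ∑ j ∈ Tset μ k, w j := by
    intro μ hμ
    rw [Finset.mem_Icc] at hμ
    have hμ1 : 1 ≤ μ := by omega
    have hcover : ∀ ν ∈ Icc μ m, ∃ k ∈ range K,
        ν ∈ Icc (2 ^ k * μ) (min (2 * (2 ^ k * μ) - 1) m) := by
      intro ν hν
      rw [Finset.mem_Icc] at hν
      have hν1 : 1 ≤ ν / μ := (Nat.one_le_div_iff (by omega)).mpr hν.1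
      refine ⟨Nat.log 2 (ν / μ), ?_, ?_⟩
      · have h2k : 2 ^ Nat.log 2 (ν / μ) ≤ ν / μ := Nat.pow_log_le_self 2 (by omega)
        have hklt : Nat.log 2 (ν / μ) < 2 ^ Nat.log 2 (ν / μ) := Nat.lt_two_pow_self
        have : ν / μ ≤ ν := Nat.div_le_self ν μ
        rw [Finset.mem_range, hK]
        omega
      · have h2k : 2 ^ Nat.log 2 (ν / μ) ≤ ν / μ := Nat.pow_log_le_self 2 (by omega)
        have h2k' : ν / μ < 2 ^ (Nat.log 2 (ν / μ) + 1) := Nat.lt_pow_succ_log_self (by norm_num) _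
        have hlow : 2 ^ Nat.log 2 (ν / μ) * μ ≤ ν := by
          calc 2 ^ Nat.log 2 (ν / μ) * μ ≤ ν / μ * μ := Nat.mul_le_mul_right μ h2k
            _ ≤ ν := Nat.div_mul_le_self ν μ
        have hhigh : ν < 2 ^ (Nat.log 2 (ν / μ) + 1) * μ :=
          (Nat.div_lt_iff_lt_mul (by omega)).mp h2k'
        have hring : 2 ^ (Nat.log 2 (ν / μ) + 1) * μ = 2 * (2 ^ Nat.log 2 (ν / μ) * μ) := by ring
        rw [Finset.mem_Icc]
        refine ⟨hlow, le_min ?_ hν.2⟩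
        omega
    have hT1 : ∑ ν ∈ Icc μ m, a ν * (ν:ℝ) ^ lam ≤
        ∑ k ∈ range K, ∑ ν ∈ Icc (2 ^ k * μ) (min (2 * (2 ^ k * μ) - 1) m), a ν * (ν:ℝ) ^ lam := by
      have h1 : ∑ ν ∈ Icc μ m, a ν * (ν:ℝ) ^ lam ≤
          ∑ ν ∈ Icc μ m, ∑ k ∈ range K,
            (if ν ∈ Icc (2 ^ k * μ) (min (2 * (2 ^ k * μ) - 1) m) then a ν * (ν:ℝ) ^ lam else 0) := by
        apply Finset.sum_le_sum
        intro ν hν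
        obtain ⟨k0, hk0, hb⟩ := hcover ν hν
        have h2 := Finset.single_le_sum (f := fun k =>
          (if ν ∈ Icc (2 ^ k * μ) (min (2 * (2 ^ k * μ) - 1) m) then a ν * (ν:ℝ) ^ lam else 0))
          (fun k _ => by
            by_cases h : ν ∈ Icc (2 ^ k * μ) (min (2 * (2 ^ k * μ) - 1) m)
            · simp only [h, if_true]
              exact mul_nonneg (ha0 ν) (Real.rpow_nonneg (Nat.cast_nonneg ν) lam)
            · simp [h]) hk0
        simpa only [hb, if_true] using h2
      have h2 : ∑ ν ∈ Icc μ m, ∑ k ∈ range K,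
            (if ν ∈ Icc (2 ^ k * μ) (min (2 * (2 ^ k * μ) - 1) m) then a ν * (ν:ℝ) ^ lam else 0) =
          ∑ k ∈ range K, ∑ ν ∈ Icc μ m,
            (if ν ∈ Icc (2 ^ k * μ) (min (2 * (2 ^ k * μ) - 1) m) then a ν * (ν:ℝ) ^ lam else 0) :=
        Finset.sum_comm
      have h3 : ∀ k ∈ range K, ∑ ν ∈ Icc μ m,
            (if ν ∈ Icc (2 ^ k * μ) (min (2 * (2 ^ k * μ) - 1) m) then a ν * (ν:ℝ) ^ lam else 0) ≤
          ∑ ν ∈ Icc (2 ^ k * μ) (min (2 * (2 ^ k * μ) - 1) m), a ν * (ν:ℝ) ^ lam := by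
        intro k _
        rw [← Finset.sum_filter]
        apply Finset.sum_le_sum_of_subset_of_nonneg
        · intro x hx; exact (Finset.mem_filter.mp hx).2
        · intro x _ _; exact mul_nonneg (ha0 x) (Real.rpow_nonneg (Nat.cast_nonneg x) lam)
      calc ∑ ν ∈ Icc μ m, a ν * (ν:ℝ) ^ lam ≤ _ := h1
        _ = _ := h2
        _ ≤ _ := Finset.sum_le_sum h3
    have hTnn : 0 ≤ ∑ ν ∈ Icc μ m, a ν * (ν:ℝ) ^ lam :=
      Finset.sum_nonneg fun ν _ => mul_nonneg (ha0 ν) (Real.rpow_nonneg (Nat.cast_nonneg ν) lam)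
    have hBnn : ∀ k ∈ range K,
        0 ≤ ∑ ν ∈ Icc (2 ^ k * μ) (min (2 * (2 ^ k * μ) - 1) m), a ν * (ν:ℝ) ^ lam :=
      fun k _ => Finset.sum_nonneg fun ν _ =>
        mul_nonneg (ha0 ν) (Real.rpow_nonneg (Nat.cast_nonneg ν) lam)
    calc (∑ ν ∈ Icc μ m, a ν * (ν:ℝ) ^ lam) ^ p
        ≤ (∑ k ∈ range K,
            ∑ ν ∈ Icc (2 ^ k * μ) (min (2 * (2 ^ k * μ) - 1) m), a ν * (ν:ℝ) ^ lam) ^ p :=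
          Real.rpow_le_rpow hTnn hT1 hp0.le
      _ ≤ ∑ k ∈ range K,
            (∑ ν ∈ Icc (2 ^ k * μ) (min (2 * (2 ^ k * μ) - 1) m), a ν * (ν:ℝ) ^ lam) ^ p :=
          aux_sum_rpow hp0 hp1 _ _ hBnn
      _ ≤ ∑ k ∈ range K, c5 * ((2 ^ k * μ : ℕ):ℝ)⁻¹ * ∑ j ∈ Tset μ k, w j := by
          apply Finset.sum_le_sum
          intro k _
          exact lemAB lam p hp0 hp1 a ha0 hmono m (2 ^ k * μ)
            (Nat.mul_pos (Nat.two_pow_pos k) hμ1)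
  -- per-k bound after swapping
  have stepk : ∀ k ∈ range K,
      ∑ μ ∈ Icc (4 * n) m, (μ:ℝ) ^ (α - 1) *
          (c5 * ((2 ^ k * μ : ℕ):ℝ)⁻¹ * ∑ j ∈ Tset μ k, w j) ≤
        c5 * (c6 * ((2:ℝ) ^ (-α)) ^ k * S) := by
    intro k _
    have hsub : ∀ μ ∈ Icc (4 * n) m, Tset μ k ⊆ Icc n m := by
      intro μ hμ
      rw [Finset.mem_Icc] at hμ
      intro j hj
      rw [hTset, Finset.mem_Ioc] at hj
      have h1 : μ ≤ 2 ^ k * μ := Nat.le_mul_of_pos_left μ (Nat.two_pow_pos k)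
      have h2 : μ / 2 ≤ 2 ^ k * μ / 2 := Nat.div_le_div_right h1
      have h3 : 2 * n ≤ μ / 2 := by omega
      rw [Finset.mem_Icc]
      have h4 : j ≤ m := le_trans hj.2 (Nat.min_le_right _ _)
      omega
    have hswap : ∑ μ ∈ Icc (4 * n) m, (μ:ℝ) ^ (α - 1) *
          (c5 * ((2 ^ k * μ : ℕ):ℝ)⁻¹ * ∑ j ∈ Tset μ k, w j) =
        c5 * ∑ j ∈ Icc n m, (∑ μ ∈ Icc (4 * n) m,
          (if j ∈ Tset μ k then (μ:ℝ) ^ (α - 1) * ((2 ^ k * μ : ℕ):ℝ)⁻¹ else 0)) * w j := by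
      have h1 : ∀ μ ∈ Icc (4 * n) m, (μ:ℝ) ^ (α - 1) *
            (c5 * ((2 ^ k * μ : ℕ):ℝ)⁻¹ * ∑ j ∈ Tset μ k, w j) =
          c5 * ∑ j ∈ Icc n m,
            (if j ∈ Tset μ k then (μ:ℝ) ^ (α - 1) * ((2 ^ k * μ : ℕ):ℝ)⁻¹ * w j else 0) := by
        intro μ hμ
        have h2 : ∑ j ∈ Icc n m,
              (if j ∈ Tset μ k then (μ:ℝ) ^ (α - 1) * ((2 ^ k * μ : ℕ):ℝ)⁻¹ * w j else 0) =
            ∑ j ∈ Tset μ k, (μ:ℝ) ^ (α - 1) * ((2 ^ k * μ : ℕ):ℝ)⁻¹ * w j := by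
          rw [Finset.sum_ite_mem, Finset.inter_eq_right.mpr (hsub μ hμ)]
        rw [h2]
        simp only [Finset.mul_sum]
        apply Finset.sum_congr rfl
        intro j _
        ring
      rw [Finset.sum_congr rfl h1, ← Finset.mul_sum, Finset.sum_comm]
      congr 1
      apply Finset.sum_congr rfl
      intro j _
      rw [Finset.sum_mul]
      apply Finset.sum_congr rfl
      intro μ' _
      split_ifs with h
      · rfl
      · rw [zero_mul]
    rw [hswap]
    have hperj : ∀ j ∈ Icc n m,
        (∑ μ ∈ Icc (4 * n) m,
          (if j ∈ Tset μ k then (μ:ℝ) ^ (α - 1) * ((2 ^ k * μ : ℕ):ℝ)⁻¹ else 0)) * w j ≤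
        (c6 * ((2 ^ k : ℕ):ℝ) ^ (-α) * (j:ℝ) ^ (α - 1)) * w j := by
      intro j hj
      rw [Finset.mem_Icc] at hj
      apply mul_le_mul_of_nonneg_right _ (hwnn j)
      have := lemCount α hα n m (2 ^ k) j Nat.one_le_two_pow (by omega) hn
      calc ∑ μ ∈ Icc (4 * n) m,
            (if j ∈ Tset μ k then (μ:ℝ) ^ (α - 1) * ((2 ^ k * μ : ℕ):ℝ)⁻¹ else 0)
          = ∑ μ ∈ Icc (4 * n) m, (if j ∈ Ioc (2 ^ k * μ / 2) (min (2 ^ k * μ) m) then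
              (μ:ℝ) ^ (α - 1) * ((2 ^ k * μ : ℕ):ℝ)⁻¹ else 0) := rfl
        _ ≤ 4 * (2:ℝ) ^ |α - 1| * ((2 ^ k : ℕ):ℝ) ^ (-α) * (j:ℝ) ^ (α - 1) := this
        _ = c6 * ((2 ^ k : ℕ):ℝ) ^ (-α) * (j:ℝ) ^ (α - 1) := by rw [hc6]
    have hcast : ((2 ^ k : ℕ):ℝ) ^ (-α) = ((2:ℝ) ^ (-α)) ^ k := by
      rw [Nat.cast_pow, Nat.cast_ofNat, ← Real.rpow_natCast (2:ℝ) k,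
        ← Real.rpow_mul (by norm_num), mul_comm, Real.rpow_mul (by norm_num), Real.rpow_natCast]
    calc c5 * ∑ j ∈ Icc n m, (∑ μ ∈ Icc (4 * n) m,
          (if j ∈ Tset μ k then (μ:ℝ) ^ (α - 1) * ((2 ^ k * μ : ℕ):ℝ)⁻¹ else 0)) * w j
        ≤ c5 * ∑ j ∈ Icc n m, (c6 * ((2 ^ k : ℕ):ℝ) ^ (-α) * (j:ℝ) ^ (α - 1)) * w j := by
          apply mul_le_mul_of_nonneg_left (Finset.sum_le_sum hperj) (by positivity)
      _ = c5 * (c6 * ((2:ℝ) ^ (-α)) ^ k * S) := by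
          rw [hcast, hS]
          simp only [Finset.mul_sum]
          apply Finset.sum_congr rfl
          intro j _
          ring
  -- assemble
  rw [hRHSeq]
  calc ∑ μ ∈ Icc (4 * n) m, (μ:ℝ) ^ (α - 1) * (∑ ν ∈ Icc μ m, a ν * (ν:ℝ) ^ lam) ^ p
      ≤ ∑ μ ∈ Icc (4 * n) m, (μ:ℝ) ^ (α - 1) *
          ∑ k ∈ range K, c5 * ((2 ^ k * μ : ℕ):ℝ)⁻¹ * ∑ j ∈ Tset μ k, w j := by
        apply Finset.sum_le_sum
        intro μ hμ
        exact mul_le_mul_of_nonneg_left (step12 μ hμ)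
          (Real.rpow_nonneg (Nat.cast_nonneg μ) _)
    _ = ∑ k ∈ range K, ∑ μ ∈ Icc (4 * n) m, (μ:ℝ) ^ (α - 1) *
          (c5 * ((2 ^ k * μ : ℕ):ℝ)⁻¹ * ∑ j ∈ Tset μ k, w j) := by
        simp_rw [Finset.mul_sum]
        exact Finset.sum_comm
    _ ≤ ∑ k ∈ range K, c5 * (c6 * ((2:ℝ) ^ (-α)) ^ k * S) := Finset.sum_le_sum stepk
    _ = c5 * c6 * S * ∑ k ∈ range K, ((2:ℝ) ^ (-α)) ^ k := by
        rw [Finset.mul_sum]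
        apply Finset.sum_congr rfl
        intro k _
        ring
    _ ≤ c5 * c6 * S * (1 - (2:ℝ) ^ (-α))⁻¹ := by
        apply mul_le_mul_of_nonneg_left (aux_geom α hα K) (by positivity)
    _ = c5 * c6 * (1 - (2:ℝ) ^ (-α))⁻¹ * S := by ring
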